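/- arXiv:2006.03381 — 4 statements merged into one kernel-verified Lean document; each statement's English description precedes it below -/
import Mathlib

section
/- Let λ₁, λ₂ > 0 and let θ₀ ∈ ℝ be such that ‖A(λ₁, λ₂, θ₀)‖ > 1. Then the function θ ↦ ‖A(λ₁, λ₂, θ)‖ is differentiable at θ₀ and its logarithmic derivative there equals (d/dθ)‖A(λ₁,λ₂,θ)‖·‖A(λ₁,λ₂,θ)‖^{−1} = ((λ₁²λ₂^{−2} + λ₁^{−2}λ₂²) − (λ₁²λ₂² + λ₁^{−2}λ₂^{−2}))·sin(2θ₀) / (2·√((‖A(λ₁,λ₂,θ₀)‖² + ‖A(λ₁,λ₂,θ₀)‖^{−2})² − 4)). -/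
/-- Operator (Euclidean) norm of a real 2×2 matrix. -/
noncomputable def opNorm (A : Matrix (Fin 2) (Fin 2) ℝ) : ℝ :=
  ‖Matrix.toEuclideanCLM (𝕜 := ℝ) A‖

/-- `A(λ₁, λ₂, θ) = diag(λ₁, λ₁⁻¹) · R_θ · diag(λ₂, λ₂⁻¹)`. -/
noncomputable def Amat (l1 l2 θ : ℝ) : Matrix (Fin 2) (Fin 2) ℝ :=
  !![l1, 0; 0, l1⁻¹] *
    !![Real.cos θ, -Real.sin θ; Real.sin θ, Real.cos θ] *
    !![l2, 0; 0, l2⁻¹]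

lemma quadform_le (α γ β μ u v : ℝ) (hμα : α ≤ μ) (hμγ : γ ≤ μ)
    (hkey : (μ - α) * (μ - γ) = β^2) :
    α*u^2 + 2*β*u*v + γ*v^2 ≤ μ*(u^2+v^2) := by
  have hp2 : (Real.sqrt (μ - α))^2 = μ - α := Real.sq_sqrt (by linarith)
  have hq2 : (Real.sqrt (μ - γ))^2 = μ - γ := Real.sq_sqrt (by linarith)
  have hpq0 : 0 ≤ Real.sqrt (μ - α) * Real.sqrt (μ - γ) :=
    mul_nonneg (Real.sqrt_nonneg _) (Real.sqrt_nonneg _)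
  have habs : Real.sqrt (μ - α) * Real.sqrt (μ - γ) = |β| := by
    rw [← Real.sqrt_sq_eq_abs, ← hkey, ← Real.sqrt_mul (by linarith) (μ - γ)]
  have h1 : 2 * β * u * v ≤ 2 * (Real.sqrt (μ - α) * Real.sqrt (μ - γ)) * (|u| * |v|) := by
    rw [habs]
    calc 2 * β * u * v ≤ |2 * β * u * v| := le_abs_self _
    _ = 2 * |β| * (|u| * |v|) := by
        rw [abs_mul, abs_mul, abs_mul, abs_of_nonneg (by norm_num : (0:ℝ) ≤ 2)]
        ring
  have h2 : 2 * (Real.sqrt (μ - α) * Real.sqrt (μ - γ)) * (|u| * |v|)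
      ≤ (μ - α) * u^2 + (μ - γ) * v^2 := by
    nlinarith [sq_nonneg (Real.sqrt (μ - α) * |u| - Real.sqrt (μ - γ) * |v|),
      sq_abs u, sq_abs v]
  nlinarith [h1, h2]


lemma normsq_apply (A : Matrix (Fin 2) (Fin 2) ℝ) (u v : ℝ) :
    ‖Matrix.toEuclideanCLM (𝕜 := ℝ) A ((WithLp.equiv 2 _).symm ![u, v])‖ ^ 2 =
      (A 0 0 * u + A 0 1 * v) ^ 2 + (A 1 0 * u + A 1 1 * v) ^ 2 := by
  rw [WithLp.equiv_symm_apply, Matrix.toEuclideanCLM_toLp, EuclideanSpace.norm_eq,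
    Real.sq_sqrt (by positivity)]
  simp [Matrix.toLin'_apply, Matrix.mulVec, dotProduct, Fin.sum_univ_two]

lemma opNorm_eq (A : Matrix (Fin 2) (Fin 2) ℝ) (μ : ℝ) (hμ0 : 0 ≤ μ)
    (hup : ∀ u v : ℝ, (A 0 0 * u + A 0 1 * v)^2 + (A 1 0 * u + A 1 1 * v)^2 ≤ μ*(u^2+v^2))
    (hlow : ∃ u v : ℝ, 0 < u^2+v^2 ∧
      (A 0 0 * u + A 0 1 * v)^2 + (A 1 0 * u + A 1 1 * v)^2 = μ*(u^2+v^2)) :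
    opNorm A = Real.sqrt μ := by
  apply le_antisymm
  · apply ContinuousLinearMap.opNorm_le_bound _ (Real.sqrt_nonneg μ)
    intro x
    have hx : x = (WithLp.equiv 2 (Fin 2 → ℝ)).symm ![x 0, x 1] := by
      ext i; fin_cases i <;> rfl
    have hnx : ‖x‖^2 = (x 0)^2 + (x 1)^2 := by
      rw [EuclideanSpace.norm_eq, Real.sq_sqrt (by positivity)]
      simp [Fin.sum_univ_two, sq_abs]
    have h2 : ‖Matrix.toEuclideanCLM (𝕜 := ℝ) A x‖^2 ≤ μ * ‖x‖^2 := by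
      rw [hnx]
      calc ‖Matrix.toEuclideanCLM (𝕜 := ℝ) A x‖^2
          = (A 0 0 * x 0 + A 0 1 * x 1) ^ 2 + (A 1 0 * x 0 + A 1 1 * x 1) ^ 2 := by
            conv_lhs => rw [hx]
            exact normsq_apply A (x 0) (x 1)
        _ ≤ μ * ((x 0)^2 + (x 1)^2) := hup _ _
    have := Real.sqrt_le_sqrt h2
    rwa [Real.sqrt_sq (norm_nonneg _), Real.sqrt_mul hμ0, Real.sqrt_sq (norm_nonneg _)] at this
  · obtain ⟨u, v, hpos, heq⟩ := hlow
    set x : EuclideanSpace ℝ (Fin 2) := (WithLp.equiv 2 (Fin 2 → ℝ)).symm ![u, v] with hxdef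
    have hnx : ‖x‖^2 = u^2 + v^2 := by
      rw [EuclideanSpace.norm_eq, Real.sq_sqrt (by positivity)]
      simp [hxdef, Fin.sum_univ_two, sq_abs]
    have hTx : ‖Matrix.toEuclideanCLM (𝕜 := ℝ) A x‖^2 = μ * ‖x‖^2 := by
      rw [hnx, hxdef, normsq_apply, heq]
    have hxpos : 0 < ‖x‖ := by
      rw [norm_pos_iff]
      intro h0
      rw [h0] at hnx
      simp at hnx
      nlinarith
    have hTx' : ‖Matrix.toEuclideanCLM (𝕜 := ℝ) A x‖ = Real.sqrt μ * ‖x‖ := by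
      have := congrArg Real.sqrt hTx
      rwa [Real.sqrt_sq (norm_nonneg _), Real.sqrt_mul hμ0, Real.sqrt_sq (norm_nonneg _)] at this
    have hle := (Matrix.toEuclideanCLM (𝕜 := ℝ) A).le_opNorm x
    rw [hTx'] at hle
    exact le_of_mul_le_mul_right hle hxpos

lemma exists_eig (α γ β μ : ℝ) (hμα : α ≤ μ) (hkey : (μ-α)*(μ-γ) = β^2) :
    ∃ u v : ℝ, 0 < u^2+v^2 ∧ α*u^2 + 2*β*u*v + γ*v^2 = μ*(u^2+v^2) := by
  by_cases h : β = 0 ∧ μ = α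
  · exact ⟨1, 0, by norm_num, by rw [h.2]; ring⟩
  · refine ⟨β, μ - α, ?_, by linear_combination (α - μ) * hkey⟩
    rcases not_and_or.1 h with hb | hm
    · have : 0 < β^2 := by positivity
      nlinarith [sq_nonneg (μ - α)]
    · have : 0 < (μ - α)^2 := by
        have : μ - α ≠ 0 := sub_ne_zero.2 hm
        positivity
      nlinarith [sq_nonneg β]

lemma mu_props (α γ β : ℝ) :
    α ≤ (α + γ + Real.sqrt ((α-γ)^2 + 4*β^2))/2 ∧
    γ ≤ (α + γ + Real.sqrt ((α-γ)^2 + 4*β^2))/2 ∧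
    ((α + γ + Real.sqrt ((α-γ)^2 + 4*β^2))/2 - α) *
      ((α + γ + Real.sqrt ((α-γ)^2 + 4*β^2))/2 - γ) = β^2 := by
  have hd2 : (Real.sqrt ((α-γ)^2 + 4*β^2))^2 = (α-γ)^2 + 4*β^2 :=
    Real.sq_sqrt (by positivity)
  have hd0 : 0 ≤ Real.sqrt ((α-γ)^2 + 4*β^2) := Real.sqrt_nonneg _
  have habs : |α - γ| ≤ Real.sqrt ((α-γ)^2 + 4*β^2) := by
    rw [abs_le]
    constructor <;> nlinarith [sq_nonneg (Real.sqrt ((α-γ)^2 + 4*β^2) - (α-γ)),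
      sq_nonneg (Real.sqrt ((α-γ)^2 + 4*β^2) + (α-γ)), sq_nonneg β]
  obtain ⟨h1, h2⟩ := abs_le.1 habs
  refine ⟨by linarith, by linarith, by nlinarith [hd2]⟩

lemma opNorm_formula (A : Matrix (Fin 2) (Fin 2) ℝ) (α γ β : ℝ)
    (hα : α = A 0 0 ^2 + A 1 0 ^2) (hγ : γ = A 0 1 ^2 + A 1 1 ^2)
    (hβ : β = A 0 0 * A 0 1 + A 1 0 * A 1 1) :
    opNorm A = Real.sqrt ((α + γ + Real.sqrt ((α-γ)^2 + 4*β^2))/2) := by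
  obtain ⟨hμα, hμγ, hkey⟩ := mu_props α γ β
  have hα0 : 0 ≤ α := by rw [hα]; positivity
  apply opNorm_eq A _ (le_trans hα0 hμα)
  · intro u v
    have h2 : (A 0 0 * u + A 0 1 * v)^2 + (A 1 0 * u + A 1 1 * v)^2
        = α*u^2 + 2*β*u*v + γ*v^2 := by rw [hα, hγ, hβ]; ring
    rw [h2]
    exact quadform_le α γ β _ u v hμα hμγ hkey
  · obtain ⟨u, v, hpos, heq⟩ := exists_eig α γ β _ hμα hkey
    refine ⟨u, v, hpos, ?_⟩
    rw [hα, hγ, hβ] at heq ⊢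
    linear_combination heq



lemma Amat_eq (l1 l2 θ : ℝ) :
    Amat l1 l2 θ = !![l1 * l2 * Real.cos θ, -(l1 * l2⁻¹ * Real.sin θ);
      l1⁻¹ * l2 * Real.sin θ, l1⁻¹ * l2⁻¹ * Real.cos θ] := by
  rw [Amat]
  ext i j
  fin_cases i <;> fin_cases j <;>
    simp [Matrix.mul_apply, Fin.sum_univ_two] <;> ring

noncomputable def tval (l1 l2 θ : ℝ) : ℝ :=
  (l1^2 * l2^2 + l1⁻¹^2 * l2⁻¹^2) * Real.cos θ ^ 2
    + (l1^2 * l2⁻¹^2 + l1⁻¹^2 * l2^2) * Real.sin θ ^ 2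

lemma opNorm_Amat (l1 l2 θ : ℝ) (h1 : l1 ≠ 0) (h2 : l2 ≠ 0) :
    opNorm (Amat l1 l2 θ) =
      Real.sqrt ((tval l1 l2 θ + Real.sqrt ((tval l1 l2 θ)^2 - 4))/2) := by
  have hP : l1 * l1⁻¹ = 1 := mul_inv_cancel₀ h1
  have hQ : l2 * l2⁻¹ = 1 := mul_inv_cancel₀ h2
  have hsc : Real.sin θ ^ 2 + Real.cos θ ^ 2 = 1 := Real.sin_sq_add_cos_sq θ
  set c := Real.cos θ
  set s := Real.sin θ
  set α := (l1*l2*c)^2 + (l1⁻¹*l2*s)^2 with hαd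
  set γ := (l1*l2⁻¹*s)^2 + (l1⁻¹*l2⁻¹*c)^2 with hγd
  set β := (l1*l2*c) * (-(l1*l2⁻¹*s)) + (l1⁻¹*l2*s) * (l1⁻¹*l2⁻¹*c) with hβd
  have hstep := opNorm_formula (Amat l1 l2 θ) α γ β
    (by rw [Amat_eq]; simp [hαd]; rfl)
    (by rw [Amat_eq]; simp [hγd]; rfl)
    (by rw [Amat_eq]; simp [hβd]; rfl)
  rw [hstep]
  have hsum : α + γ = tval l1 l2 θ := by rw [hαd, hγd, tval]; ring
  have hdet : α * γ - β^2 = 1 := by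
    rw [hαd, hγd, hβd]
    linear_combination (l1*l1⁻¹ + 1) * ((l2*l2⁻¹)^2*(s^2+c^2)^2) * hP
      + (l2*l2⁻¹ + 1) * (s^2+c^2)^2 * hQ + (s^2+c^2+1) * hsc
  have hdisc : (α-γ)^2 + 4*β^2 = (tval l1 l2 θ)^2 - 4 := by
    rw [← hsum]; linear_combination (-4 : ℝ) * hdet
  rw [hsum, hdisc]

/-- Logarithmic derivative of `θ ↦ ‖A(λ₁,λ₂,θ)‖` at a point where `‖A‖ > 1`. -/
theorem hasDerivAt_norm_theta (l1 l2 : ℝ) (h1 : 0 < l1) (h2 : 0 < l2)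
    (θ₀ : ℝ) (hA : 1 < opNorm (Amat l1 l2 θ₀)) :
    ∃ D : ℝ, HasDerivAt (fun θ => opNorm (Amat l1 l2 θ)) D θ₀ ∧
      D * (opNorm (Amat l1 l2 θ₀))⁻¹ =
        ((l1 ^ (2 : ℤ) * l2 ^ (-2 : ℤ) + l1 ^ (-2 : ℤ) * l2 ^ (2 : ℤ))
            - (l1 ^ (2 : ℤ) * l2 ^ (2 : ℤ) + l1 ^ (-2 : ℤ) * l2 ^ (-2 : ℤ)))
          * Real.sin (2 * θ₀)
          / (2 * Real.sqrt
              ((opNorm (Amat l1 l2 θ₀) ^ 2 + (opNorm (Amat l1 l2 θ₀)) ^ (-2 : ℤ)) ^ 2 - 4)) := by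
  have h1' : l1 ≠ 0 := ne_of_gt h1
  have h2' : l2 ≠ 0 := ne_of_gt h2
  set a : ℝ := l1^2 * l2^2 + l1⁻¹^2 * l2⁻¹^2 with ha
  set b : ℝ := l1^2 * l2⁻¹^2 + l1⁻¹^2 * l2^2 with hb
  -- t ≥ 2 everywhere
  have ha2 : 2 ≤ a := by
    rw [ha]
    nlinarith [sq_nonneg (l1*l2 - l1⁻¹*l2⁻¹), mul_inv_cancel₀ h1', mul_inv_cancel₀ h2',
      sq_nonneg (l1*l2), sq_nonneg (l1⁻¹*l2⁻¹)]
  have hb2 : 2 ≤ b := by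
    rw [hb]
    nlinarith [sq_nonneg (l1*l2⁻¹ - l1⁻¹*l2), mul_inv_cancel₀ h1', mul_inv_cancel₀ h2']
  have htval : ∀ θ, tval l1 l2 θ = a * Real.cos θ ^2 + b * Real.sin θ ^2 := fun θ => rfl
  have ht2 : ∀ θ, 2 ≤ tval l1 l2 θ := by
    intro θ
    rw [htval]
    nlinarith [Real.sin_sq_add_cos_sq θ, sq_nonneg (Real.sin θ), sq_nonneg (Real.cos θ)]
  -- t₀ > 2
  set t₀ := tval l1 l2 θ₀ with ht₀
  have ht0 : 2 < t₀ := by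
    by_contra h
    push_neg at h
    have he : t₀ = 2 := le_antisymm h (ht2 θ₀)
    rw [opNorm_Amat l1 l2 θ₀ h1' h2', ← ht₀, he] at hA
    norm_num at hA
  -- derivative of t
  set c := Real.cos θ₀ with hc
  set s := Real.sin θ₀ with hs
  set T : ℝ := (b - a) * Real.sin (2*θ₀) with hT
  have htd : HasDerivAt (tval l1 l2) T θ₀ := by
    have hcos : HasDerivAt (fun θ => Real.cos θ ^ 2) (2 * c ^ 1 * (-s)) θ₀ :=
      (Real.hasDerivAt_cos θ₀).pow 2
    have hsin : HasDerivAt (fun θ => Real.sin θ ^ 2) (2 * s ^ 1 * c) θ₀ :=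
      (Real.hasDerivAt_sin θ₀).pow 2
    have := (hcos.const_mul a).add (hsin.const_mul b)
    have heq : (fun θ => a * Real.cos θ ^2 + b * Real.sin θ ^2) = tval l1 l2 := by
      funext θ; rw [htval]
    replace this : HasDerivAt (tval l1 l2) (a * (2 * c ^ 1 * -s) + b * (2 * s ^ 1 * c)) θ₀ := by
      rw [← heq]; exact this
    convert this using 1
    rw [hT, Real.sin_two_mul, ← hc, ← hs]
    ring
  set d := Real.sqrt (t₀^2 - 4) with hdd
  have hd2 : d^2 = t₀^2 - 4 := Real.sq_sqrt (by nlinarith)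
  have hdpos : 0 < d := Real.sqrt_pos.2 (by nlinarith)
  have hsq : HasDerivAt (fun θ => Real.sqrt (tval l1 l2 θ ^ 2 - 4))
      (1 / (2 * d) * (2 * t₀ ^ 1 * T)) θ₀ := by
    have hin : HasDerivAt (fun θ => tval l1 l2 θ ^ 2 - 4) (2 * t₀ ^ 1 * T) θ₀ :=
      (htd.pow 2).sub_const 4
    exact (Real.hasDerivAt_sqrt (by nlinarith)).comp θ₀ hin
  set m₀ := (t₀ + d)/2 with hm₀
  have hmpos : 0 < m₀ := by rw [hm₀]; linarith
  have hmid : HasDerivAt (fun θ => (tval l1 l2 θ + Real.sqrt (tval l1 l2 θ ^2 - 4))/2)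
      ((T + 1 / (2 * d) * (2 * t₀ ^ 1 * T))/2) θ₀ := (htd.add hsq).div_const 2
  set D : ℝ := 1 / (2 * Real.sqrt m₀) * ((T + 1 / (2 * d) * (2 * t₀ ^ 1 * T))/2) with hD
  have hNd : HasDerivAt (fun θ => Real.sqrt ((tval l1 l2 θ + Real.sqrt (tval l1 l2 θ ^2 - 4))/2))
      D θ₀ := (Real.hasDerivAt_sqrt (ne_of_gt hmpos)).comp θ₀ hmid
  have hfun : (fun θ => opNorm (Amat l1 l2 θ))
      = fun θ => Real.sqrt ((tval l1 l2 θ + Real.sqrt (tval l1 l2 θ ^2 - 4))/2) := by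
    funext θ; exact opNorm_Amat l1 l2 θ h1' h2'
  refine ⟨D, by rw [hfun]; exact hNd, ?_⟩
  -- now the value computation
  set N := opNorm (Amat l1 l2 θ₀) with hN
  have hNval : N = Real.sqrt m₀ := by
    rw [hN, opNorm_Amat l1 l2 θ₀ h1' h2']
  have hN2 : N^2 = m₀ := by rw [hNval]; exact Real.sq_sqrt (le_of_lt hmpos)
  have hNpos : 0 < N := lt_trans one_pos hA
  have hmul : N^2 * (t₀ - m₀) = 1 := by
    rw [hN2, hm₀]
    linear_combination (-1/4 : ℝ) * hd2
  have hNinv : (N^2)⁻¹ = t₀ - m₀ := inv_eq_of_mul_eq_one_right hmul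
  have hzp : ∀ x : ℝ, x ^ (-2:ℤ) = (x^2)⁻¹ := fun x => by
    rw [zpow_neg, zpow_two, sq]
  have hzp2 : ∀ x : ℝ, x ^ (2:ℤ) = x^2 := fun x => by rw [zpow_two, sq]
  simp only [hzp, hzp2]; rw [hNinv, hN2]
  have hmt : m₀ + (t₀ - m₀) = t₀ := by ring
  rw [hmt, ← hdd]
  have hnum : ((l1^2 * (l2^2)⁻¹ + (l1^2)⁻¹ * l2^2) - (l1^2 * l2^2 + (l1^2)⁻¹ * (l2^2)⁻¹))
      = b - a := by rw [ha, hb]; ring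
  rw [hnum, ← hT]
  -- D * N⁻¹ = T / (2 * d)
  rw [hD, ← hNval]
  have hNne : N ≠ 0 := ne_of_gt hNpos
  have hdne : d ≠ 0 := ne_of_gt hdpos
  field_simp
  linear_combination (-2 * T) * hN2 + (-2 * T) * hm₀
end

section
/- Let λ₂ > 0 and θ ∈ ℝ be fixed, and let λ₁ > 0 be such that ‖A(λ₁, λ₂, θ)‖ > 1. Then the function s ↦ ‖A(s, λ₂, θ)‖ is differentiable at s = λ₁ and |(∂/∂λ₁)‖A(λ₁,λ₂,θ)‖| · ‖A(λ₁,λ₂,θ)‖^{−1} ≤ 1/λ₁. Symmetrically, for fixed λ₁ > 0 and θ, if λ₂ > 0 is such that ‖A(λ₁, λ₂, θ)‖ > 1, then |(∂/∂λ₂)‖A(λ₁,λ₂,θ)‖| · ‖A(λ₁,λ₂,θ)‖^{−1} ≤ 1/λ₂. -/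
open Matrix

lemma norm_sq_apply (A : Matrix (Fin 2) (Fin 2) ℝ) (x : EuclideanSpace ℝ (Fin 2)) :
    ‖(Matrix.toEuclideanCLM (𝕜 := ℝ) A) x‖^2 =
      (A 0 0 * x 0 + A 0 1 * x 1)^2 + (A 1 0 * x 0 + A 1 1 * x 1)^2 := by
  have h : (Matrix.toEuclideanCLM (𝕜 := ℝ) A) x = (WithLp.equiv _ _).symm (A.mulVec (WithLp.equiv _ _ x)) := rfl
  rw [h, EuclideanSpace.norm_eq, Real.sq_sqrt (by positivity)]
  simp [Fin.sum_univ_two, Matrix.mulVec, dotProduct, sq_abs]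

lemma norm_sq_self (x : EuclideanSpace ℝ (Fin 2)) : ‖x‖^2 = (x 0)^2 + (x 1)^2 := by
  rw [EuclideanSpace.norm_eq, Real.sq_sqrt (by positivity)]
  simp [Fin.sum_univ_two, sq_abs]

lemma quad_le (p q r μ x0 x1 : ℝ) (h1 : 0 ≤ μ - p) (h2 : 0 ≤ μ - r)
    (h3 : (μ - p) * (μ - r) = q ^ 2) :
    p * x0 ^ 2 + 2 * q * x0 * x1 + r * x1 ^ 2 ≤ μ * (x0 ^ 2 + x1 ^ 2) := by
  rcases eq_or_lt_of_le h1 with h | h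
  · have hq : q = 0 := by nlinarith
    have e1 : (μ - p) * x0 ^ 2 = 0 := by rw [← h]; ring
    have e2 : 2 * q * x0 * x1 = 0 := by rw [hq]; ring
    nlinarith [mul_nonneg h2 (sq_nonneg x1)]
  · nlinarith [sq_nonneg ((μ - p) * x0 - q * x1), sq_nonneg x1]

set_option maxHeartbeats 1000000 in
lemma opNorm_eq_s10 (A : Matrix (Fin 2) (Fin 2) ℝ) (hdet : A.det = 1) :
    opNorm A = Real.sqrt ((A 0 0 ^ 2 + A 0 1 ^ 2 + A 1 0 ^ 2 + A 1 1 ^ 2 +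
      Real.sqrt ((A 0 0 ^ 2 + A 0 1 ^ 2 + A 1 0 ^ 2 + A 1 1 ^ 2) ^ 2 - 4)) / 2) := by
  set a := A 0 0 with ha; set b := A 0 1 with hb; set c := A 1 0 with hc; set d := A 1 1 with hd
  have hdet' : a * d - b * c = 1 := by
    have := hdet; rw [Matrix.det_fin_two] at this
    rw [ha, hb, hc, hd]; linarith
  set t : ℝ := a ^ 2 + b ^ 2 + c ^ 2 + d ^ 2 with ht
  have ht2 : 2 ≤ t := by
    rw [ht]; nlinarith [sq_nonneg (a - d), sq_nonneg (a + d), sq_nonneg (b - c), sq_nonneg (b + c)]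
  set u : ℝ := Real.sqrt (t ^ 2 - 4) with hu
  have hu0 : 0 ≤ u := Real.sqrt_nonneg _
  have hu2 : u ^ 2 = t ^ 2 - 4 := Real.sq_sqrt (by nlinarith)
  set μ : ℝ := (t + u) / 2 with hμ
  have hμ1 : 1 ≤ μ := by rw [hμ]; linarith
  set p : ℝ := a ^ 2 + c ^ 2 with hp
  set q : ℝ := a * b + c * d with hq
  set r : ℝ := b ^ 2 + d ^ 2 with hr
  have hpr : p * r - q ^ 2 = 1 := by rw [hp, hq, hr]; nlinarith
  have hsum : p + r = t := by rw [hp, hr, ht]; ring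
  have hmu2 : μ ^ 2 - t * μ + 1 = 0 := by rw [hμ]; nlinarith
  have h3 : (μ - p) * (μ - r) = q ^ 2 := by nlinarith
  have hsum2 : (μ - p) + (μ - r) = u := by rw [hμ]; linarith
  have h1 : 0 ≤ μ - p := by nlinarith [sq_nonneg q]
  have h2 : 0 ≤ μ - r := by nlinarith [sq_nonneg q]
  have hμpos : 0 < μ := by linarith
  have key : ∀ x : EuclideanSpace ℝ (Fin 2),
      ‖(Matrix.toEuclideanCLM (𝕜 := ℝ) A) x‖ ^ 2 =
        p * (x 0) ^ 2 + 2 * q * (x 0) * (x 1) + r * (x 1) ^ 2 := by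
    intro x; rw [norm_sq_apply, hp, hq, hr, ha, hb, hc, hd]; ring
  have hub : opNorm A ≤ Real.sqrt μ := by
    apply ContinuousLinearMap.opNorm_le_bound _ (Real.sqrt_nonneg _)
    intro x
    have h4 := quad_le p q r μ (x 0) (x 1) h1 h2 h3
    rw [← key x] at h4
    have hx : (x 0) ^ 2 + (x 1) ^ 2 = ‖x‖ ^ 2 := (norm_sq_self x).symm
    have h5 : ‖(Matrix.toEuclideanCLM (𝕜 := ℝ) A) x‖ ^ 2 ≤ (Real.sqrt μ * ‖x‖) ^ 2 := by
      rw [mul_pow, Real.sq_sqrt hμpos.le, ← hx]; exact h4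
    have h6 := Real.sqrt_le_sqrt h5
    rwa [Real.sqrt_sq (norm_nonneg _), Real.sqrt_sq (by positivity)] at h6
  -- lower bound: find eigen direction
  have hlb : Real.sqrt μ ≤ opNorm A := by
    obtain ⟨x0, x1, hx ,hquad⟩ : ∃ x0 x1 : ℝ, ¬(x0 = 0 ∧ x1 = 0) ∧
        p * x0 ^ 2 + 2 * q * x0 * x1 + r * x1 ^ 2 = μ * (x0 ^ 2 + x1 ^ 2) := by
      rcases eq_or_ne q 0 with hq0 | hq0
      · rcases mul_eq_zero.mp (by rw [h3, hq0]; ring) with h | h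
        · exact ⟨1, 0, by simp, by nlinarith⟩
        · exact ⟨0, 1, by simp, by nlinarith⟩
      · exact ⟨μ - r, q, by simp [hq0], by nlinarith⟩
    set x : EuclideanSpace ℝ (Fin 2) := (WithLp.equiv _ _).symm ![x0, x1] with hxdef
    have hx0 : x 0 = x0 := rfl
    have hx1 : x 1 = x1 := rfl
    have hxn : x ≠ 0 := by
      intro h
      apply hx
      constructor
      · rw [← hx0, h]; rfl
      · rw [← hx1, h]; rfl
    have hnx : 0 < ‖x‖ := norm_pos_iff.mpr hxn
    have heq : ‖(Matrix.toEuclideanCLM (𝕜 := ℝ) A) x‖ ^ 2 = (Real.sqrt μ * ‖x‖) ^ 2 := by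
      rw [key x, hx0, hx1, mul_pow, Real.sq_sqrt hμpos.le, norm_sq_self, hx0, hx1]
      exact hquad
    have heq2 : ‖(Matrix.toEuclideanCLM (𝕜 := ℝ) A) x‖ = Real.sqrt μ * ‖x‖ := by
      have := congrArg Real.sqrt heq
      rwa [Real.sqrt_sq (norm_nonneg _), Real.sqrt_sq (by positivity)] at this
    have hle := ContinuousLinearMap.le_opNorm (Matrix.toEuclideanCLM (𝕜 := ℝ) A) x
    rw [heq2] at hle
    have := le_of_mul_le_mul_right hle hnx
    exact this
  have : opNorm A = Real.sqrt μ := le_antisymm hub hlb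
  rw [this, hμ, hu, ht]


noncomputable def gfun (w : ℝ) : ℝ := Real.sqrt ((w + Real.sqrt (w ^ 2 - 4)) / 2)

lemma main_aux (a b l : ℝ) (F : ℝ → ℝ) (hab : 1 ≤ a * b) (ha : 0 ≤ a) (hb : 0 ≤ b)
    (hl : 0 < l) (hF : ∀ s : ℝ, 0 < s → F s = gfun (a * s ^ 2 + b / s ^ 2))
    (hgt : 1 < F l) :
    ∃ D, HasDerivAt F D l ∧ |D| * (F l)⁻¹ ≤ 1 / l := by
  have hl' : l ≠ 0 := hl.ne'
  set X : ℝ := a * l ^ 2 with hX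
  set Y : ℝ := b / l ^ 2 with hY
  have hX0 : 0 ≤ X := by positivity
  have hY0 : 0 ≤ Y := by positivity
  have hXY : 1 ≤ X * Y := by
    have : X * Y = a * b := by rw [hX, hY]; field_simp
    rw [this]; exact hab
  set t : ℝ := X + Y with htdef
  have ht2' : 2 ≤ t := by nlinarith [sq_nonneg (X - Y)]
  -- t > 2 from F l > 1
  have hFl : F l = gfun t := by rw [hF l hl, htdef, hX, hY]
  have ht2 : 2 < t := by
    rcases lt_or_eq_of_le ht2' with h | h
    · exact h
    · exfalso
      rw [hFl, gfun, ← h] at hgt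
      norm_num at hgt
  set u : ℝ := Real.sqrt (t ^ 2 - 4) with hu
  have htsq : 0 < t ^ 2 - 4 := by nlinarith
  have hu2 : u ^ 2 = t ^ 2 - 4 := Real.sq_sqrt htsq.le
  have hu0 : 0 < u := Real.sqrt_pos.mpr htsq
  have hinner : 0 < (t + u) / 2 := by linarith
  set g : ℝ := gfun t with hg
  have hg2 : g ^ 2 = (t + u) / 2 := by
    rw [hg, gfun, Real.sq_sqrt hinner.le]
  have hg0 : 0 < g := by rw [hg, gfun]; exact Real.sqrt_pos.mpr hinner
  -- derivative of t(s)
  set t' : ℝ := 2 * a * l - 2 * b / l ^ 3 with ht'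
  have hs2 : HasDerivAt (fun s : ℝ => s ^ 2) (2 * l) l := by
    simpa using hasDerivAt_pow 2 l
  have h1 : HasDerivAt (fun s : ℝ => a * s ^ 2 + b / s ^ 2) t' l := by
    have hA : HasDerivAt (fun s : ℝ => a * s ^ 2) (a * (2 * l)) l := hs2.const_mul a
    have hB : HasDerivAt (fun s : ℝ => b / s ^ 2)
        ((0 * l ^ 2 - b * (2 * l)) / (l ^ 2) ^ 2) l :=
      (hasDerivAt_const l b).div hs2 (pow_ne_zero _ hl')
    have := hA.add hB
    refine this.congr_deriv ?_
    rw [ht']; field_simp; ring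
  have htl : a * l ^ 2 + b / l ^ 2 = t := by rw [htdef, hX, hY]
  have h2 : HasDerivAt (fun s : ℝ => (a * s ^ 2 + b / s ^ 2) ^ 2 - 4) (2 * t * t') l := by
    have := (h1.pow 2).sub_const 4
    simpa [htl] using this.congr_deriv (by rw [htl]; ring)
  have h3 : HasDerivAt (fun s : ℝ => Real.sqrt ((a * s ^ 2 + b / s ^ 2) ^ 2 - 4))
      (2 * t * t' / (2 * u)) l := by
    have := h2.sqrt (by rw [htl]; exact htsq.ne')
    simpa [htl, hu] using this
  have h4 : HasDerivAt (fun s : ℝ =>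
      (a * s ^ 2 + b / s ^ 2 + Real.sqrt ((a * s ^ 2 + b / s ^ 2) ^ 2 - 4)) / 2)
      ((t' + 2 * t * t' / (2 * u)) / 2) l := (h1.add h3).div_const 2
  have h5 : HasDerivAt (fun s : ℝ => gfun (a * s ^ 2 + b / s ^ 2))
      (((t' + 2 * t * t' / (2 * u)) / 2) / (2 * g)) l := by
    have h := h4.sqrt (by rw [htl, ← hu]; exact hinner.ne')
    simp only [gfun]
    have e : Real.sqrt ((a * l ^ 2 + b / l ^ 2 +
        Real.sqrt ((a * l ^ 2 + b / l ^ 2) ^ 2 - 4)) / 2) = g := by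
      rw [htl, ← hu, hg, show gfun t = Real.sqrt ((t + Real.sqrt (t ^ 2 - 4)) / 2) from rfl, ← hu]
    rw [e] at h
    exact h
  set D : ℝ := ((t' + 2 * t * t' / (2 * u)) / 2) / (2 * g) with hD
  have hDval : D = t' * g / (2 * u) := by
    rw [hD]
    have htu : t + u = 2 * g ^ 2 := by linarith
    have hu' : u ≠ 0 := hu0.ne'
    have hg' : g ≠ 0 := hg0.ne'
    calc (t' + 2 * t * t' / (2 * u)) / 2 / (2 * g) = t' * (t + u) / (4 * u * g) := by
          field_simp; ring
      _ = t' * g / (2 * u) := by rw [htu]; field_simp; ring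
  refine ⟨D, ?_, ?_⟩
  · apply h5.congr_of_eventuallyEq
    filter_upwards [eventually_gt_nhds hl] with s hs
    exact hF s hs
  · rw [hFl, hDval]
    rw [abs_div, abs_mul, abs_of_pos hg0, abs_of_pos (by linarith : (0:ℝ) < 2 * u)]
    rw [div_mul_eq_mul_div, mul_assoc, mul_inv_cancel₀ hg0.ne', mul_one]
    rw [div_le_div_iff₀ (by linarith) hl]
    -- |t'| * l ≤ 2u
    have hkey : (|t'| * l) ^ 2 ≤ (2 * u) ^ 2 := by
      have hlt' : t' * l = 2 * X - 2 * Y := by rw [ht', hX, hY]; field_simp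
      have h7 : (t' * l) ^ 2 = (2 * X - 2 * Y) ^ 2 := by rw [hlt']
      rw [mul_pow, sq_abs, mul_pow, hu2]
      nlinarith [h7, hXY]
    have h6 := Real.sqrt_le_sqrt hkey
    rw [Real.sqrt_sq (by positivity), Real.sqrt_sq (by positivity)] at h6
    linarith


lemma Amat_entries (l1 l2 θ : ℝ) : Amat l1 l2 θ =
    !![l1 * Real.cos θ * l2, -(l1 * Real.sin θ) * l2⁻¹;
       l1⁻¹ * Real.sin θ * l2, l1⁻¹ * Real.cos θ * l2⁻¹] := by
  simp [Amat, Matrix.mul_fin_two]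

lemma Amat_det (l1 l2 θ : ℝ) (h1 : l1 ≠ 0) (h2 : l2 ≠ 0) : (Amat l1 l2 θ).det = 1 := by
  simp [Amat, Matrix.det_mul, Matrix.det_fin_two_of]
  field_simp
  linear_combination Real.sin_sq_add_cos_sq θ

lemma one_le_ab (c : ℝ) (hc : 0 < c) (θ : ℝ) :
    1 ≤ ((Real.cos θ) ^ 2 * c ^ 2 + (Real.sin θ) ^ 2 / c ^ 2) *
      ((Real.sin θ) ^ 2 * c ^ 2 + (Real.cos θ) ^ 2 / c ^ 2) := by
  have h := Real.sin_sq_add_cos_sq θ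
  have hc' : c ≠ 0 := hc.ne'
  have habeq : ((Real.cos θ) ^ 2 * c ^ 2 + (Real.sin θ) ^ 2 / c ^ 2) *
      ((Real.sin θ) ^ 2 * c ^ 2 + (Real.cos θ) ^ 2 / c ^ 2) - 1 =
      (Real.sin θ * Real.cos θ * (c ^ 4 - 1)) ^ 2 / c ^ 4 := by
    field_simp
    linear_combination (Real.sin θ ^ 2 + Real.cos θ ^ 2 + 1) * c ^ 4 * h
  have h0 : 0 ≤ (Real.sin θ * Real.cos θ * (c ^ 4 - 1)) ^ 2 / c ^ 4 := by positivity
  linarith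

lemma opNorm_Amat_left (l2 θ : ℝ) (hl2 : 0 < l2) (s : ℝ) (hs : 0 < s) :
    opNorm (Amat s l2 θ) = gfun (((Real.cos θ) ^ 2 * l2 ^ 2 + (Real.sin θ) ^ 2 / l2 ^ 2) * s ^ 2
      + ((Real.sin θ) ^ 2 * l2 ^ 2 + (Real.cos θ) ^ 2 / l2 ^ 2) / s ^ 2) := by
  rw [opNorm_eq_s10 _ (Amat_det s l2 θ hs.ne' hl2.ne'), Amat_entries]
  rw [gfun]
  have e : (!![s * Real.cos θ * l2, -(s * Real.sin θ) * l2⁻¹;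
       s⁻¹ * Real.sin θ * l2, s⁻¹ * Real.cos θ * l2⁻¹] : Matrix (Fin 2) (Fin 2) ℝ) 0 0 ^ 2 +
      (!![s * Real.cos θ * l2, -(s * Real.sin θ) * l2⁻¹;
       s⁻¹ * Real.sin θ * l2, s⁻¹ * Real.cos θ * l2⁻¹] : Matrix (Fin 2) (Fin 2) ℝ) 0 1 ^ 2 +
      (!![s * Real.cos θ * l2, -(s * Real.sin θ) * l2⁻¹;
       s⁻¹ * Real.sin θ * l2, s⁻¹ * Real.cos θ * l2⁻¹] : Matrix (Fin 2) (Fin 2) ℝ) 1 0 ^ 2 +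
      (!![s * Real.cos θ * l2, -(s * Real.sin θ) * l2⁻¹;
       s⁻¹ * Real.sin θ * l2, s⁻¹ * Real.cos θ * l2⁻¹] : Matrix (Fin 2) (Fin 2) ℝ) 1 1 ^ 2 =
      ((Real.cos θ) ^ 2 * l2 ^ 2 + (Real.sin θ) ^ 2 / l2 ^ 2) * s ^ 2
      + ((Real.sin θ) ^ 2 * l2 ^ 2 + (Real.cos θ) ^ 2 / l2 ^ 2) / s ^ 2 := by
    simp [Matrix.cons_val_zero, Matrix.cons_val_one, Matrix.head_cons]
    field_simp
    ring
  rw [e]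

lemma opNorm_Amat_right (l1 θ : ℝ) (hl1 : 0 < l1) (s : ℝ) (hs : 0 < s) :
    opNorm (Amat l1 s θ) = gfun (((Real.cos θ) ^ 2 * l1 ^ 2 + (Real.sin θ) ^ 2 / l1 ^ 2) * s ^ 2
      + ((Real.sin θ) ^ 2 * l1 ^ 2 + (Real.cos θ) ^ 2 / l1 ^ 2) / s ^ 2) := by
  rw [opNorm_eq_s10 _ (Amat_det l1 s θ hl1.ne' hs.ne'), Amat_entries]
  rw [gfun]
  have e : (!![l1 * Real.cos θ * s, -(l1 * Real.sin θ) * s⁻¹;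
       l1⁻¹ * Real.sin θ * s, l1⁻¹ * Real.cos θ * s⁻¹] : Matrix (Fin 2) (Fin 2) ℝ) 0 0 ^ 2 +
      (!![l1 * Real.cos θ * s, -(l1 * Real.sin θ) * s⁻¹;
       l1⁻¹ * Real.sin θ * s, l1⁻¹ * Real.cos θ * s⁻¹] : Matrix (Fin 2) (Fin 2) ℝ) 0 1 ^ 2 +
      (!![l1 * Real.cos θ * s, -(l1 * Real.sin θ) * s⁻¹;
       l1⁻¹ * Real.sin θ * s, l1⁻¹ * Real.cos θ * s⁻¹] : Matrix (Fin 2) (Fin 2) ℝ) 1 0 ^ 2 +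
      (!![l1 * Real.cos θ * s, -(l1 * Real.sin θ) * s⁻¹;
       l1⁻¹ * Real.sin θ * s, l1⁻¹ * Real.cos θ * s⁻¹] : Matrix (Fin 2) (Fin 2) ℝ) 1 1 ^ 2 =
      ((Real.cos θ) ^ 2 * l1 ^ 2 + (Real.sin θ) ^ 2 / l1 ^ 2) * s ^ 2
      + ((Real.sin θ) ^ 2 * l1 ^ 2 + (Real.cos θ) ^ 2 / l1 ^ 2) / s ^ 2 := by
    simp [Matrix.cons_val_zero, Matrix.cons_val_one, Matrix.head_cons]
    field_simp
    ring
  rw [e]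

/-- Bounds on the logarithmic partial derivatives of `‖A(λ₁,λ₂,θ)‖` with
respect to `λ₁` and `λ₂`. -/
theorem deriv_norm_in_lambda_bounds :
    (∀ l1 l2 θ : ℝ, 0 < l1 → 0 < l2 → 1 < opNorm (Amat l1 l2 θ) →
      ∃ D : ℝ, HasDerivAt (fun s => opNorm (Amat s l2 θ)) D l1 ∧
        |D| * (opNorm (Amat l1 l2 θ))⁻¹ ≤ 1 / l1) ∧
    (∀ l1 l2 θ : ℝ, 0 < l1 → 0 < l2 → 1 < opNorm (Amat l1 l2 θ) →
      ∃ D : ℝ, HasDerivAt (fun s => opNorm (Amat l1 s θ)) D l2 ∧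
        |D| * (opNorm (Amat l1 l2 θ))⁻¹ ≤ 1 / l2) := by
  constructor
  · intro l1 l2 θ hl1 hl2 hgt
    exact main_aux _ _ l1 (fun s => opNorm (Amat s l2 θ))
      (one_le_ab l2 hl2 θ) (by positivity) (by positivity) hl1
      (fun s hs => opNorm_Amat_left l2 θ hl2 s hs) hgt
  · intro l1 l2 θ hl1 hl2 hgt
    exact main_aux _ _ l2 (fun s => opNorm (Amat l1 s θ))
      (one_le_ab l1 hl1 θ) (by positivity) (by positivity) hl2
      (fun s hs => opNorm_Amat_right l1 θ hl1 s hs) hgt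
end

section
/- There exists an absolute constant C > 0 such that for all real numbers ε₁, ε₂ with 0 < ε₂ ≤ ε₁ and every M ≥ √2·ε₁, one has |∫₀^M sgn(x² − ε₁²)/√((x² − ε₁²)² + ε₂⁴) dx| ≤ C/ε₁, where sgn(t) equals 1 for t > 0, −1 for t < 0, and 0 for t = 0. -/
open intervalIntegral MeasureTheory Set

set_option maxHeartbeats 2000000 in
/-- `|∫₀^M sgn(x² − ε₁²)/√((x² − ε₁²)² + ε₂⁴) dx| ≤ C/ε₁` for `0 < ε₂ ≤ ε₁` and
`M ≥ √2 ε₁`, with an absolute constant `C`. -/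
theorem integral_sign_div_sqrt_bound :
    ∃ C > 0, ∀ ε₁ ε₂ M : ℝ, 0 < ε₂ → ε₂ ≤ ε₁ → Real.sqrt 2 * ε₁ ≤ M →
      |∫ x in (0:ℝ)..M,
          Real.sign (x ^ 2 - ε₁ ^ 2) / Real.sqrt ((x ^ 2 - ε₁ ^ 2) ^ 2 + ε₂ ^ 4)|
        ≤ C / ε₁ := by
  refine ⟨4, by norm_num, fun a b M hb hba hM => ?_⟩
  have ha : 0 < a := hb.trans_le hba
  have hb4 : 0 < b ^ 4 := by positivity
  set c : ℝ := Real.sqrt 2 * a with hc_def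
  have hsqrt2 : 1 < Real.sqrt 2 := by
    rw [show (1:ℝ) = Real.sqrt 1 by simp]
    exact Real.sqrt_lt_sqrt (by norm_num) (by norm_num)
  have hac : a < c := by
    have := mul_lt_mul_of_pos_right hsqrt2 ha
    simpa [hc_def] using this
  have hcM : c ≤ M := hM
  have hc0 : 0 < c := ha.trans hac
  set f : ℝ → ℝ := fun x => Real.sign (x ^ 2 - a ^ 2) / Real.sqrt ((x ^ 2 - a ^ 2) ^ 2 + b ^ 4)
    with hf_def
  set F : ℝ → ℝ := fun x => 1 / Real.sqrt ((x ^ 2 - a ^ 2) ^ 2 + b ^ 4) with hF_def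
  have hden : ∀ x : ℝ, 0 < Real.sqrt ((x ^ 2 - a ^ 2) ^ 2 + b ^ 4) := fun x =>
    Real.sqrt_pos.2 (by positivity)
  have hpoly : Continuous fun x : ℝ => (x ^ 2 - a ^ 2) ^ 2 + b ^ 4 :=
    (((continuous_pow 2).sub continuous_const).pow 2).add continuous_const
  have hFcont : Continuous F := by
    apply Continuous.div continuous_const (Real.continuous_sqrt.comp hpoly)
    exact fun x => (hden x).ne'
  have hFnonneg : ∀ x, 0 ≤ F x := fun x => by positivity
  have hfF : ∀ x : ℝ, a < x → f x = F x := by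
    intro x hx
    have hx2 : a ^ 2 < x ^ 2 := pow_lt_pow_left₀ hx ha.le (by norm_num)
    simp only [hf_def, hF_def, Real.sign_of_pos (sub_pos.2 hx2)]
  have hfF' : ∀ x : ℝ, 0 ≤ x → x < a → f x = -F x := by
    intro x hx0 hx
    have hx2 : x ^ 2 < a ^ 2 := pow_lt_pow_left₀ hx hx0 (by norm_num)
    simp only [hf_def, hF_def, Real.sign_of_neg (sub_neg.2 hx2)]
    ring
  have hne_a : ∀ᵐ x : ℝ, x ≠ a := by
    refine MeasureTheory.ae_iff.mpr ?_
    simpa using MeasureTheory.measure_singleton (a : ℝ)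
  have hFi : ∀ u v : ℝ, IntervalIntegrable F volume u v := fun u v =>
    hFcont.intervalIntegrable u v
  have hfi1 : IntervalIntegrable f volume 0 a := by
    refine ((hFcont.neg).intervalIntegrable 0 a).congr_ae ?_
    refine (ae_restrict_iff' measurableSet_uIoc).2 ?_
    filter_upwards [hne_a] with x hx hxI
    rw [uIoc_of_le ha.le] at hxI
    exact (hfF' x hxI.1.le (lt_of_le_of_ne hxI.2 hx)).symm
  have hfi2 : IntervalIntegrable f volume a c := by
    refine (hFi a c).congr ?_
    refine fun x hxI => ?_
    rw [uIoc_of_le hac.le] at hxI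
    exact (hfF x hxI.1).symm
  have hfi3 : IntervalIntegrable f volume c M := by
    refine (hFi c M).congr ?_
    refine fun x hxI => ?_
    rw [uIoc_of_le hcM] at hxI
    exact (hfF x (hac.trans hxI.1)).symm
  have hI1 : ∫ x in (0:ℝ)..a, f x = -∫ x in (0:ℝ)..a, F x := by
    rw [← intervalIntegral.integral_neg]
    refine integral_congr_ae ?_
    filter_upwards [hne_a] with x hx hxI
    rw [uIoc_of_le ha.le] at hxI
    exact hfF' x hxI.1.le (lt_of_le_of_ne hxI.2 hx)
  have hI2 : ∫ x in a..c, f x = ∫ x in a..c, F x := by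
    refine integral_congr_ae (Filter.Eventually.of_forall fun x hxI => ?_)
    rw [uIoc_of_le hac.le] at hxI
    exact hfF x hxI.1
  have hI3 : ∫ x in c..M, f x = ∫ x in c..M, F x := by
    refine integral_congr_ae (Filter.Eventually.of_forall fun x hxI => ?_)
    rw [uIoc_of_le hcM] at hxI
    exact hfF x (hac.trans hxI.1)
  -- change of variables on [a, c]
  set φ : ℝ → ℝ := fun y => Real.sqrt (2 * a ^ 2 - y ^ 2) with hφ_def
  have hφ0 : φ 0 = c := by
    rw [hφ_def, hc_def]
    simp only
    rw [show (2 : ℝ) * a ^ 2 - 0 ^ 2 = 2 * a ^ 2 by ring,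
      Real.sqrt_mul (by norm_num : (0:ℝ) ≤ 2), Real.sqrt_sq ha.le]
  have hφa : φ a = a := by
    rw [hφ_def]
    simp only
    rw [show (2 : ℝ) * a ^ 2 - a ^ 2 = a ^ 2 by ring, Real.sqrt_sq ha.le]
  have hsub : ∀ y ∈ uIcc (0:ℝ) a, a ^ 2 ≤ 2 * a ^ 2 - y ^ 2 := by
    intro y hy
    rw [uIcc_of_le ha.le] at hy
    have : y ^ 2 ≤ a ^ 2 := pow_le_pow_left₀ hy.1 hy.2 2
    linarith
  have hφderiv : ∀ y ∈ uIcc (0:ℝ) a,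
      HasDerivAt φ (-y / Real.sqrt (2 * a ^ 2 - y ^ 2)) y := by
    intro y hy
    have h1 : (0:ℝ) < 2 * a ^ 2 - y ^ 2 := lt_of_lt_of_le (by positivity) (hsub y hy)
    have hu : HasDerivAt (fun y : ℝ => 2 * a ^ 2 - y ^ 2) (-(2 * y)) y := by
      simpa using ((hasDerivAt_pow 2 y).const_sub (2 * a ^ 2))
    have h2 := (Real.hasDerivAt_sqrt h1.ne').comp y hu
    refine h2.congr_deriv ?_
    have hs : Real.sqrt (2 * a ^ 2 - y ^ 2) ≠ 0 := (Real.sqrt_pos.2 h1).ne'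
    field_simp
  have hsqcont : Continuous fun y : ℝ => Real.sqrt (2 * a ^ 2 - y ^ 2) :=
    Real.continuous_sqrt.comp (continuous_const.sub (continuous_pow 2))
  have hφ'cont : ContinuousOn (fun y : ℝ => -y / Real.sqrt (2 * a ^ 2 - y ^ 2)) (uIcc 0 a) := by
    apply ContinuousOn.div continuous_neg.continuousOn hsqcont.continuousOn
    intro y hy
    exact (Real.sqrt_pos.2 (lt_of_lt_of_le (by positivity) (hsub y hy))).ne'
  have hcov : (∫ y in (0:ℝ)..a, (-y / Real.sqrt (2 * a ^ 2 - y ^ 2)) • (F ∘ φ) y)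
      = ∫ x in (φ 0)..(φ a), F x :=
    integral_comp_smul_deriv hφderiv hφ'cont hFcont
  have hca : ∫ x in (φ 0)..(φ a), F x = ∫ x in c..a, F x := by rw [hφ0, hφa]
  have hmain : ∫ x in a..c, F x
      = ∫ y in (0:ℝ)..a, (y / Real.sqrt (2 * a ^ 2 - y ^ 2)) * F (φ y) := by
    rw [integral_symm, ← hca, ← hcov, ← intervalIntegral.integral_neg]
    refine integral_congr fun y _ => ?_
    simp only [Function.comp, smul_eq_mul, neg_div, neg_mul, neg_neg]
  set G : ℝ → ℝ := fun y => (y / Real.sqrt (2 * a ^ 2 - y ^ 2)) * F (φ y) - F y with hG_def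
  have hGi : IntervalIntegrable (fun y => (y / Real.sqrt (2 * a ^ 2 - y ^ 2)) * F (φ y))
      volume 0 a := by
    apply ContinuousOn.intervalIntegrable
    apply ContinuousOn.mul
    · apply ContinuousOn.div continuous_id.continuousOn hsqcont.continuousOn
      intro y hy
      exact (Real.sqrt_pos.2 (lt_of_lt_of_le (by positivity) (hsub y hy))).ne'
    · exact (hFcont.comp hsqcont).continuousOn
  have hsum : (∫ x in (0:ℝ)..a, f x) + (∫ x in a..c, f x) = ∫ y in (0:ℝ)..a, G y := by
    rw [hI1, hI2, hmain, hG_def, integral_sub hGi (hFi 0 a)]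
    ring
  have hGbound : ∀ y ∈ Set.uIoc (0:ℝ) a, |G y| ≤ 2 / a ^ 2 := by
    intro y hy
    rw [uIoc_of_le ha.le] at hy
    obtain ⟨hy0, hya⟩ := hy
    have hy0' : 0 ≤ y := hy0.le
    have ht : 0 ≤ a ^ 2 - y ^ 2 := by nlinarith [pow_le_pow_left₀ hy0' hya 2]
    have hs2 : (0:ℝ) < 2 * a ^ 2 - y ^ 2 := by nlinarith
    set s : ℝ := Real.sqrt (2 * a ^ 2 - y ^ 2) with hs_def
    have hs_sq : s ^ 2 = 2 * a ^ 2 - y ^ 2 := Real.sq_sqrt hs2.le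
    have hs_pos : 0 < s := Real.sqrt_pos.2 hs2
    have has : a ≤ s := by
      have h' := Real.sqrt_le_sqrt (show a ^ 2 ≤ 2 * a ^ 2 - y ^ 2 by nlinarith)
      rwa [Real.sqrt_sq ha.le] at h'
    have hys : y ≤ s := by nlinarith
    have hφF : F (φ y) = F y := by
      simp only [hF_def, hφ_def]
      congr 3
      rw [Real.sq_sqrt hs2.le]
      ring
    have hGeq : G y = F y * ((y - s) / s) := by
      simp only [hG_def, hφF, ← hs_def]
      field_simp
    have h2 : s - y ≤ 2 * (a ^ 2 - y ^ 2) / a := by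
      rw [le_div_iff₀ ha]
      nlinarith
    have h3 : F y * (a ^ 2 - y ^ 2) ≤ 1 := by
      have hle : a ^ 2 - y ^ 2 ≤ Real.sqrt ((y ^ 2 - a ^ 2) ^ 2 + b ^ 4) := by
        rw [show a ^ 2 - y ^ 2 = Real.sqrt ((y ^ 2 - a ^ 2) ^ 2) by
          rw [show (y ^ 2 - a ^ 2) ^ 2 = (a ^ 2 - y ^ 2) ^ 2 by ring, Real.sqrt_sq ht]]
        exact Real.sqrt_le_sqrt (by nlinarith)
      simp only [hF_def]
      rw [div_mul_eq_mul_div, one_mul, div_le_one (hden y)]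
      exact hle
    have h5 : F y * (s - y) ≤ 2 / a :=
      calc F y * (s - y) ≤ F y * (2 * (a ^ 2 - y ^ 2) / a) :=
            mul_le_mul_of_nonneg_left h2 (hFnonneg y)
        _ = 2 / a * (F y * (a ^ 2 - y ^ 2)) := by ring
        _ ≤ 2 / a * 1 := mul_le_mul_of_nonneg_left h3 (by positivity)
        _ = 2 / a := mul_one _
    rw [hGeq, abs_mul, abs_of_nonneg (hFnonneg y), abs_div,
      abs_of_nonneg hs_pos.le, abs_sub_comm, abs_of_nonneg (by linarith : (0:ℝ) ≤ s - y)]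
    calc F y * ((s - y) / s) = F y * (s - y) / s := by ring
      _ ≤ (2 / a) / s := by gcongr
      _ ≤ (2 / a) / a := by gcongr
      _ = 2 / a ^ 2 := by rw [div_div, sq]
  have hGle : |∫ y in (0:ℝ)..a, G y| ≤ 2 / a := by
    have h := intervalIntegral.norm_integral_le_of_norm_le_const
      (C := 2 / a ^ 2) (f := G) (a := (0:ℝ)) (b := a) (fun x hx => by
        rw [Real.norm_eq_abs]; exact hGbound x hx)
    rw [Real.norm_eq_abs] at h
    calc |∫ y in (0:ℝ)..a, G y| ≤ 2 / a ^ 2 * |a - 0| := h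
      _ = 2 / a := by
          rw [sub_zero, abs_of_nonneg ha.le, sq]
          field_simp
  have htail_nonneg : 0 ≤ ∫ x in c..M, F x :=
    integral_nonneg hcM fun u _ => hFnonneg u
  have h0notin : (0:ℝ) ∉ uIcc c M := by
    rw [uIcc_of_le hcM]
    intro h
    exact absurd h.1 (by linarith)
  have htail : ∫ x in c..M, F x ≤ 2 / a := by
    have hmono : ∫ x in c..M, F x ≤ ∫ x in c..M, 2 * x ^ (-2 : ℤ) := by
      apply integral_mono_on hcM (hFi c M)
      · refine ContinuousOn.intervalIntegrable ?_
        refine continuousOn_const.mul ?_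
        apply ContinuousOn.zpow₀ continuousOn_id
        intro x hx
        exact Or.inl (fun h => h0notin (h ▸ hx))
      · intro x hx
        have hx0 : c ≤ x := hx.1
        have hxpos : 0 < x := hc0.trans_le hx0
        have hx2 : 2 * a ^ 2 ≤ x ^ 2 := by
          have h' : c ^ 2 ≤ x ^ 2 := pow_le_pow_left₀ hc0.le hx0 2
          rw [hc_def, mul_pow, Real.sq_sqrt (by norm_num : (0:ℝ) ≤ 2)] at h'
          linarith
        have hnn : (0:ℝ) ≤ x ^ 2 - a ^ 2 := by nlinarith [sq_nonneg a]
        have h1 : x ^ 2 / 2 ≤ Real.sqrt ((x ^ 2 - a ^ 2) ^ 2 + b ^ 4) := by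
          have hh : Real.sqrt ((x ^ 2 - a ^ 2) ^ 2) ≤ Real.sqrt ((x ^ 2 - a ^ 2) ^ 2 + b ^ 4) :=
            Real.sqrt_le_sqrt (by nlinarith)
          rw [Real.sqrt_sq hnn] at hh
          nlinarith [sq_nonneg a]
        simp only [hF_def]
        rw [show (2:ℝ) * x ^ (-2:ℤ) = 2 / x ^ 2 by
          rw [zpow_neg, zpow_two]; field_simp]
        rw [div_le_div_iff₀ (hden x) (by positivity)]
        nlinarith [hden x]
    have hval : ∫ x in c..M, 2 * x ^ (-2 : ℤ) = 2 * (c⁻¹ - M⁻¹) := by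
      rw [intervalIntegral.integral_const_mul,
        integral_zpow (Or.inr ⟨by norm_num, h0notin⟩)]
      norm_num
      ring
    have hfin : 2 * (c⁻¹ - M⁻¹) ≤ 2 / a := by
      have h1 : c⁻¹ ≤ a⁻¹ := inv_anti₀ ha hac.le
      have h2 : (0:ℝ) ≤ M⁻¹ := inv_nonneg.2 (hc0.trans_le hcM).le
      rw [div_eq_mul_inv]
      linarith
    exact (hmono.trans_eq hval).trans hfin
  have hsplit : ∫ x in (0:ℝ)..M, f x
      = ((∫ x in (0:ℝ)..a, f x) + (∫ x in a..c, f x)) + ∫ x in c..M, f x := by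
    rw [integral_add_adjacent_intervals hfi1 hfi2,
      integral_add_adjacent_intervals (hfi1.trans hfi2) hfi3]
  calc |∫ x in (0:ℝ)..M, f x|
      = |(∫ y in (0:ℝ)..a, G y) + ∫ x in c..M, F x| := by rw [hsplit, hsum, hI3]
    _ ≤ |∫ y in (0:ℝ)..a, G y| + |∫ x in c..M, F x| := abs_add_le _ _
    _ ≤ 2 / a + 2 / a := add_le_add hGle (by rw [abs_of_nonneg htail_nonneg]; exact htail)
    _ = 4 / a := by ring
end

section
/- There exist absolute constants c > 0 and C > 0 such that for all real numbers ε₁ > 0 and ε₂ > 0 and every M ≥ max(ε₁, ε₂), one has c/max(ε₁, ε₂) ≤ ∫₀^M (x² + ε₁²)/((x² + ε₁²)² + ε₂⁴) dx ≤ C/max(ε₁, ε₂). -/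
/-- Two-sided estimate
`c/max(ε₁,ε₂) ≤ ∫₀^M (x² + ε₁²)/((x² + ε₁²)² + ε₂⁴) dx ≤ C/max(ε₁,ε₂)`. -/
theorem integral_rational_bounds :
    ∃ c > 0, ∃ C > 0, ∀ ε₁ ε₂ M : ℝ, 0 < ε₁ → 0 < ε₂ → max ε₁ ε₂ ≤ M →
      c / max ε₁ ε₂ ≤
          (∫ x in (0:ℝ)..M, (x ^ 2 + ε₁ ^ 2) / ((x ^ 2 + ε₁ ^ 2) ^ 2 + ε₂ ^ 4)) ∧
      (∫ x in (0:ℝ)..M, (x ^ 2 + ε₁ ^ 2) / ((x ^ 2 + ε₁ ^ 2) ^ 2 + ε₂ ^ 4)) ≤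
          C / max ε₁ ε₂ := by
  refine ⟨1/15, by norm_num, 3, by norm_num, fun ε₁ ε₂ M hε₁ hε₂ hM => ?_⟩
  set m := max ε₁ ε₂ with hm
  have hm0 : 0 < m := lt_of_lt_of_le hε₁ (le_max_left _ _)
  have h1m : ε₁ ≤ m := le_max_left _ _
  have h2m : ε₂ ≤ m := le_max_right _ _
  set f : ℝ → ℝ := fun x => (x ^ 2 + ε₁ ^ 2) / ((x ^ 2 + ε₁ ^ 2) ^ 2 + ε₂ ^ 4) with hf
  have hden : ∀ x : ℝ, 0 < (x ^ 2 + ε₁ ^ 2) ^ 2 + ε₂ ^ 4 := fun x => by positivity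
  have hfc : Continuous f :=
    Continuous.div (by continuity) (by continuity) fun x => (hden x).ne'
  have hf_nonneg : ∀ x, 0 ≤ f x := fun x => div_nonneg (by positivity) (hden x).le
  have hint : ∀ a b : ℝ, IntervalIntegrable f MeasureTheory.volume a b := fun a b =>
    hfc.intervalIntegrable a b
  have hsplit : (∫ x in (0:ℝ)..M, f x) = (∫ x in (0:ℝ)..m, f x) + ∫ x in m..M, f x :=
    (intervalIntegral.integral_add_adjacent_intervals (hint 0 m) (hint m M)).symm
  have hmsq : m ^ 2 ≤ ε₁ ^ 2 + ε₂ ^ 2 := by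
    rcases max_cases ε₁ ε₂ with ⟨h, _⟩ | ⟨h, _⟩ <;> rw [hm, h] <;> nlinarith
  constructor
  · -- lower bound
    rw [hsplit]
    have tail : 0 ≤ ∫ x in m..M, f x :=
      intervalIntegral.integral_nonneg hM fun x _ => hf_nonneg x
    have main : (1/15 : ℝ) / m ≤ ∫ x in (0:ℝ)..m, f x := by
      have h1 : (∫ x in (0:ℝ)..m, x ^ 2 / (5 * m ^ 4)) ≤ ∫ x in (0:ℝ)..m, f x := by
        apply intervalIntegral.integral_mono_on hm0.le
        · exact (Continuous.div_const (by continuity) _).intervalIntegrable _ _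
        · exact hint 0 m
        · rintro x ⟨hx0, hxm⟩
          have hx2 : x ^ 2 ≤ m ^ 2 := by nlinarith
          have he1 : ε₁ ^ 2 ≤ m ^ 2 := by nlinarith
          have he2 : ε₂ ^ 2 ≤ m ^ 2 := by nlinarith
          have hN : (x ^ 2 + ε₁ ^ 2) ^ 2 ≤ (2 * m ^ 2) ^ 2 := by
            apply pow_le_pow_left₀ (by positivity)
            linarith
          refine div_le_div₀ (by positivity) (by nlinarith) (hden x) ?_
          nlinarith [sq_nonneg ε₂, sq_nonneg m]
      calc (1/15 : ℝ) / m = (∫ x in (0:ℝ)..m, x ^ 2) / (5 * m ^ 4) := by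
            rw [integral_pow]
            field_simp
            ring
        _ = ∫ x in (0:ℝ)..m, x ^ 2 / (5 * m ^ 4) := (intervalIntegral.integral_div _ _).symm
        _ ≤ _ := h1
    linarith
  · -- upper bound
    rw [hsplit]
    have main : (∫ x in (0:ℝ)..m, f x) ≤ 3 / 2 / m := by
      have h1 : (∫ x in (0:ℝ)..m, f x) ≤ ∫ _x in (0:ℝ)..m, (3 / 2 / m ^ 2 : ℝ) := by
        apply intervalIntegral.integral_mono_on hm0.le (hint 0 m)
          intervalIntegrable_const
        rintro x ⟨hx0, hxm⟩
        rw [hf, div_le_div_iff₀ (hden x) (by positivity)]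
        nlinarith [sq_nonneg (x ^ 2 + ε₁ ^ 2 - ε₂ ^ 2), sq_nonneg x, sq_nonneg ε₁,
          mul_le_mul_of_nonneg_left hmsq (by positivity : (0:ℝ) ≤ x ^ 2 + ε₁ ^ 2)]
      rw [intervalIntegral.integral_const, smul_eq_mul] at h1
      calc (∫ x in (0:ℝ)..m, f x) ≤ (m - 0) * (3 / 2 / m ^ 2) := h1
        _ = 3 / 2 / m := by field_simp; ring
    have tail : (∫ x in m..M, f x) ≤ 1 / m := by
      have h1 : (∫ x in m..M, f x) ≤ ∫ x in m..M, (x : ℝ) ^ (-2 : ℤ) := by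
        apply intervalIntegral.integral_mono_on hM (hint m M)
        · apply ContinuousOn.intervalIntegrable
          apply ContinuousOn.zpow₀ continuousOn_id
          intro x hx
          left
          rw [Set.uIcc_of_le hM] at hx
          exact ne_of_gt (lt_of_lt_of_le hm0 hx.1)
        · rintro x ⟨hxm, hxM⟩
          have hx0 : 0 < x := lt_of_lt_of_le hm0 hxm
          rw [hf]
          have : (x : ℝ) ^ (-2 : ℤ) = 1 / x ^ 2 := by
            rw [zpow_neg, one_div, show ((2:ℤ)) = ((2:ℕ):ℤ) by norm_num, zpow_natCast]
          rw [this, div_le_div_iff₀ (hden x) (by positivity)]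
          nlinarith
      have h2 : (∫ x in m..M, (x : ℝ) ^ (-2 : ℤ)) = m⁻¹ - M⁻¹ := by
        rw [integral_zpow]
        · norm_num
          ring
        · right
          constructor
          · norm_num
          · rw [Set.uIcc_of_le hM]
            rintro ⟨h0m, _⟩
            exact absurd h0m (not_le.mpr hm0)
      rw [h2] at h1
      have hM0 : 0 < M := lt_of_lt_of_le hm0 hM
      have : 0 < M⁻¹ := by positivity
      calc (∫ x in m..M, f x) ≤ m⁻¹ - M⁻¹ := h1
        _ ≤ 1 / m := by rw [one_div]; linarith
    have h3 : (3:ℝ) / 2 / m + 1 / m ≤ 3 / m := by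
      rw [← add_div]
      gcongr
      · norm_num
    exact (add_le_add main tail).trans h3
end
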